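/- Let π(x) = e^{ax+b} for a ≠ 0 on ℝ, let μ_σ be a symmetric density, let g : (0,∞) → (0,∞), and define the proposal density q(x,y) = Z⁻¹ g(e^{a(y−x)}) μ_σ(y−x) where Z = ∫ g(e^{aw}) μ_σ(w) dw. Then q satisfies detailed balance π(x)q(x,y) = π(y)q(y,x) for all x,y if and only if g(t) = t·g(1/t) for all t > 0. -/

import Mathlib

open MeasureTheory Real

/-- For a log-linear target `π(x) = e^{ax+b}` with `a ≠ 0`, a symmetric positive
density `μ_σ`, and proposal density `q(x,y) = Z⁻¹ g(e^{a(y−x)}) μ_σ(y−x)` with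
`Z = ∫ g(e^{aw}) μ_σ(w) dw`, the kernel `q` satisfies detailed balance with
respect to `π` if and only if `g(t) = t·g(1/t)` for all `t > 0`. -/
theorem first_order_exact_iff_balancing
    (a b : ℝ) (ha : a ≠ 0)
    (μσ : ℝ → ℝ) (hμ_pos : ∀ w, 0 < μσ w) (hμ_symm : ∀ w, μσ w = μσ (-w))
    (hμ_int : Integrable μσ) (hμ_prob : ∫ w, μσ w = 1)
    (g : ℝ → ℝ) (hg_pos : ∀ t > (0:ℝ), 0 < g t)
    (Z : ℝ) (hZ : Z = ∫ w, g (Real.exp (a * w)) * μσ w) (hZ_pos : 0 < Z) :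
    (∀ x y : ℝ,
        Real.exp (a * x + b) * (Z⁻¹ * g (Real.exp (a * (y - x))) * μσ (y - x))
          = Real.exp (a * y + b) * (Z⁻¹ * g (Real.exp (a * (x - y))) * μσ (x - y)))
      ↔ (∀ t > (0:ℝ), g t = t * g (1 / t)) := by
  constructor
  · intro h t ht
    have hw := h 0 (Real.log t / a)
    have hwa : a * (Real.log t / a - 0) = Real.log t := by field_simp; ring
    have hwa' : a * (0 - Real.log t / a) = -Real.log t := by field_simp; ring
    rw [hwa, hwa', Real.exp_log ht, ← Real.log_inv, Real.exp_log (by positivity)] at hw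
    have hμ : μσ (Real.log t / a - 0) = μσ (0 - Real.log t / a) := by
      rw [hμ_symm]; ring_nf
    rw [hμ] at hw
    have hμpos := hμ_pos (0 - Real.log t / a)
    have hZi : Z⁻¹ ≠ 0 := by positivity
    have hexp : Real.exp (a * (Real.log t / a) + b)
        = t * Real.exp (a * 0 + b) := by
      rw [Real.exp_add, Real.exp_add]
      have : a * (Real.log t / a) = Real.log t := by field_simp
      rw [this, Real.exp_log ht]; simp [Real.exp_zero]
    rw [hexp] at hw
    have hc : g t * (Real.exp (a * 0 + b) * Z⁻¹ * μσ (0 - Real.log t / a))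
        = (t * g (1 / t)) * (Real.exp (a * 0 + b) * Z⁻¹ * μσ (0 - Real.log t / a)) := by
      rw [one_div]; linear_combination hw
    exact mul_right_cancel₀ (by positivity) hc
  · intro h x y
    have ht : (0:ℝ) < Real.exp (a * (y - x)) := Real.exp_pos _
    have hg := h _ ht
    rw [one_div, ← Real.exp_neg] at hg
    have hneg : -(a * (y - x)) = a * (x - y) := by ring
    rw [hneg] at hg
    have hμ : μσ (y - x) = μσ (x - y) := by rw [hμ_symm]; ring_nf
    rw [hg, hμ]
    have : a * x + b + a * (y - x) = a * y + b := by ring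
    rw [show Real.exp (a*x+b) * (Z⁻¹ * (Real.exp (a*(y-x)) * g (Real.exp (a*(x-y)))) * μσ (x-y)) = Real.exp (a*x+b) * Real.exp (a*(y-x)) * (Z⁻¹ * g (Real.exp (a*(x-y))) * μσ (x-y)) from by ring, ← Real.exp_add, this]
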